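/- Let {U(S)} be the NTU LP game given by A, {b^i}, and {v^i} on a finite nonempty player set N, and let P' ⊆ ℝ^J × ℝ^N be a polyhedron satisfying conv(C'(N)) ⊆ P' ⊆ Z(N). Let (x*, u*) be an extreme point of P'. If u* ∉ C(N), then there exists a nonempty coalition S ⊆ N such that (x*, u*) ∈ int U'(S), the point (x*, u*) does not belong to conv(P' \ int U'(S)), and conv(C'(N)) ⊆ conv(P' \ int U'(S)); consequently P' can be strictly strengthened to a polyhedron P̂' with conv(C'(N)) ⊆ P̂' ⊊ P' (by intersecting with a half-space containing conv(P' \ int U'(S)) but not (x*, u*)). -/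

import Mathlib

open Finset

/-- The design space `X(S)` of a coalition `S` in an NTU LP game. -/
def designSpace {K J N : Type*} [Fintype J] (A : K → J → ℝ) (b : N → K → ℝ)
    (S : Finset N) : Set (J → ℝ) :=
  {x | (∀ j, 0 ≤ x j) ∧ ∀ k, (∑ j, A k j * x j) ≤ ∑ i ∈ S, b i k}

/-- The design-utility space `Z(S)` of a coalition `S`. -/
def duSpace {K J N : Type*} [Fintype J] (A : K → J → ℝ) (b : N → K → ℝ)
    (v : N → J → ℝ) (S : Finset N) : Set ((J → ℝ) × (N → ℝ)) :=
  {p | p.1 ∈ designSpace A b S ∧ ∀ i ∈ S, p.2 i ≤ ∑ j, v i j * p.1 j}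

/-- The utility space `U(S) = proj_u Z(S)` of a coalition `S`. -/
def utilitySpace {K J N : Type*} [Fintype J] (A : K → J → ℝ) (b : N → K → ℝ)
    (v : N → J → ℝ) (S : Finset N) : Set (N → ℝ) :=
  Prod.snd '' duSpace A b v S

/-- The extended set `U'(S) = ℝᴶ × U(S)`. -/
def utilitySpaceExt {K J N : Type*} [Fintype J] (A : K → J → ℝ) (b : N → K → ℝ)
    (v : N → J → ℝ) (S : Finset N) : Set ((J → ℝ) × (N → ℝ)) :=
  {p | p.2 ∈ utilitySpace A b v S}

/-- The core `C(N) = U(N) \ ⋃_{∅ ≠ S ⊆ N} int U(S)` of an NTU LP game. -/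
def core {K J N : Type*} [Fintype J] [Fintype N] (A : K → J → ℝ) (b : N → K → ℝ)
    (v : N → J → ℝ) : Set (N → ℝ) :=
  utilitySpace A b v Finset.univ \
    ⋃ (S : Finset N) (_ : S.Nonempty), interior (utilitySpace A b v S)

/-- The extended core `C'(N) = Z(N) \ ⋃_{∅ ≠ S ⊆ N} int U'(S)`. -/
def coreExt {K J N : Type*} [Fintype J] [Fintype N] (A : K → J → ℝ) (b : N → K → ℝ)
    (v : N → J → ℝ) : Set ((J → ℝ) × (N → ℝ)) :=
  duSpace A b v Finset.univ \
    ⋃ (S : Finset N) (_ : S.Nonempty), interior (utilitySpaceExt A b v S)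

section Aux
variable {J N : Type*} [Fintype J] [Fintype N]

noncomputable def pairL (c : (J → ℝ) × (N → ℝ)) : ((J → ℝ) × (N → ℝ)) →ₗ[ℝ] ℝ where
  toFun z := (∑ j, c.1 j * z.1 j) + ∑ i, c.2 i * z.2 i
  map_add' z w := by
    simp only [Prod.fst_add, Prod.snd_add, Pi.add_apply, mul_add, Finset.sum_add_distrib]
    ring
  map_smul' t z := by
    simp only [Prod.smul_fst, Prod.smul_snd, Pi.smul_apply, smul_eq_mul, RingHom.id_apply,
      Finset.mul_sum, mul_add]
    congr 1 <;> exact Finset.sum_congr rfl fun _ _ => by ring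

theorem pairL_apply (c z : (J → ℝ) × (N → ℝ)) :
    pairL c z = (∑ j, c.1 j * z.1 j) + ∑ i, c.2 i * z.2 i := rfl

theorem pairL_cont (c : (J → ℝ) × (N → ℝ)) : Continuous (pairL c) :=
  (pairL c).continuous_of_finiteDimensional

/-- Key separation lemma: an extreme point of a polyhedron can be strictly separated
from any closed subset of the polyhedron avoiding a neighbourhood of the point. -/
theorem exposed_cut {q : ℕ} (C : Fin q → (J → ℝ) × (N → ℝ)) (d0 : Fin q → ℝ)
    (P' : Set ((J → ℝ) × (N → ℝ)))
    (hP : P' = {z | ∀ l, pairL (C l) z ≤ d0 l})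
    (zstar : (J → ℝ) × (N → ℝ))
    (hext : zstar ∈ Set.extremePoints ℝ P')
    (D : Set ((J → ℝ) × (N → ℝ))) (hDsub : D ⊆ P') (hDclosed : IsClosed D)
    (hDz : zstar ∉ D) (O : Set ((J → ℝ) × (N → ℝ))) (hO : IsOpen O)
    (hzO : zstar ∈ O) (hDO : Disjoint D O) :
    ∃ c : (J → ℝ) × (N → ℝ), ∃ d : ℝ,
      (∀ z ∈ D, pairL c z ≤ d) ∧ d < pairL c zstar := by
  classical
  have hzP : zstar ∈ P' := hext.1
  have hmem : ∀ z, z ∈ P' ↔ ∀ l, pairL (C l) z ≤ d0 l := fun z => by rw [hP]; rfl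
  set I : Finset (Fin q) := Finset.univ.filter (fun l => pairL (C l) zstar = d0 l) with hI
  set c : (J → ℝ) × (N → ℝ) :=
    (fun j => ∑ l ∈ I, (C l).1 j, fun i => ∑ l ∈ I, (C l).2 i) with hcdef
  have hc : ∀ z, pairL c z = ∑ l ∈ I, pairL (C l) z := by
    intro z
    simp only [pairL_apply, hcdef, Finset.sum_mul]
    rw [Finset.sum_comm, Finset.sum_comm (s := Finset.univ) (t := I)]
    rw [← Finset.sum_add_distrib]
  set M : ℝ := ∑ l ∈ I, d0 l with hM
  have hzM : pairL c zstar = M := by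
    rw [hc]
    exact Finset.sum_congr rfl fun l hl => (Finset.mem_filter.mp hl).2
  have hle : ∀ z ∈ P', pairL c z ≤ M := by
    intro z hz
    rw [hc]
    exact Finset.sum_le_sum fun l _ => (hmem z).mp hz l
  -- the set where the inactive constraints are strict
  have hzball : ∃ ε > 0, Metric.ball zstar ε ⊆ O := Metric.isOpen_iff.mp hO zstar hzO
  obtain ⟨ε, hε, hball⟩ := hzball
  -- Lemma A : directions killed by all active constraints are zero
  have hzero : ∀ w : (J → ℝ) × (N → ℝ), (∀ l ∈ I, pairL (C l) w = 0) → w = 0 := by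
    intro w hw
    by_contra hwne
    -- auxiliary open set: strict inactive constraints
    have hOpen2 : IsOpen {z : (J → ℝ) × (N → ℝ) | ∀ l ∉ I, pairL (C l) z < d0 l} := by
      have : {z : (J → ℝ) × (N → ℝ) | ∀ l ∉ I, pairL (C l) z < d0 l} =
          ⋂ l, ⋂ (_ : l ∉ I), {z | pairL (C l) z < d0 l} := by
        ext z; simp [Set.mem_iInter]
      rw [this]
      exact isOpen_iInter_of_finite fun l => isOpen_iInter_of_finite fun _ =>
        isOpen_lt (pairL_cont (C l)) continuous_const
    have hzO2 : zstar ∈ {z : (J → ℝ) × (N → ℝ) | ∀ l ∉ I, pairL (C l) z < d0 l} := by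
      intro l hl
      refine lt_of_le_of_ne ((hmem zstar).mp hzP l) ?_
      intro h
      exact hl (Finset.mem_filter.mpr ⟨Finset.mem_univ l, h⟩)
    obtain ⟨δ, hδ, hballδ⟩ := Metric.isOpen_iff.mp hOpen2 zstar hzO2
    set t : ℝ := δ / (2 * (‖w‖ + 1)) with ht
    have hwpos : (0:ℝ) < ‖w‖ + 1 := by positivity
    have htpos : 0 < t := by positivity
    have hdist : ∀ s : ℝ, |s| ≤ t → zstar + s • w ∈ Metric.ball zstar δ := by
      intro s hs
      rw [Metric.mem_ball, dist_eq_norm, add_sub_cancel_left, norm_smul, Real.norm_eq_abs]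
      calc |s| * ‖w‖ ≤ t * ‖w‖ := by
            apply mul_le_mul_of_nonneg_right hs (norm_nonneg w)
        _ ≤ t * (‖w‖ + 1) := by nlinarith
        _ = δ / 2 := by rw [ht]; field_simp
        _ < δ := by linarith
    have hmemP : ∀ s : ℝ, |s| ≤ t → zstar + s • w ∈ P' := by
      intro s hs
      rw [hmem]
      intro l
      by_cases hl : l ∈ I
      · rw [map_add, map_smul, hw l hl, smul_eq_mul, mul_zero, add_zero]
        exact (hmem zstar).mp hzP l
      · exact le_of_lt (hballδ (hdist s hs) l hl)
    have h1 : zstar + t • w ∈ P' := hmemP t (by rw [abs_of_pos htpos])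
    have h2 : zstar + (-t) • w ∈ P' := hmemP (-t) (by rw [abs_neg, abs_of_pos htpos])
    have hseg : zstar ∈ openSegment ℝ (zstar + t • w) (zstar + (-t) • w) := by
      refine ⟨1/2, 1/2, by norm_num, by norm_num, by norm_num, ?_⟩
      module
    have := hext.2 h1 h2 hseg
    have : t • w = 0 := by
      have h := congrArg (fun z => z - zstar) this
      simpa using h
    exact hwne ((smul_eq_zero.mp this).resolve_left (ne_of_gt htpos))
  -- uniqueness of maximizer
  have huniq : ∀ z ∈ P', pairL c z = M → z = zstar := by
    intro z hz hzM'
    have h1 : ∀ l ∈ I, pairL (C l) z ≤ d0 l := fun l _ => (hmem z).mp hz l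
    have heach : ∀ l ∈ I, pairL (C l) z = d0 l := by
      have := (Finset.sum_eq_sum_iff_of_le h1).mp (by rw [← hc z, hzM'])
      exact this
    have : z - zstar = 0 := by
      apply hzero
      intro l hl
      rw [map_sub, heach l hl, (Finset.mem_filter.mp hl).2, sub_self]
    exact sub_eq_zero.mp this
  -- boundedness of the near-optimal slice
  have hbdd : ∃ R : ℝ, ∀ z ∈ P', M - 1 ≤ pairL c z → ‖z‖ ≤ R := by
    by_contra h
    push_neg at h
    choose zseq hz1 hz2 hz3 using fun n : ℕ => h ((n : ℝ) + ‖zstar‖ + 1)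
    set r : ℕ → ℝ := fun n => ‖zseq n - zstar‖ with hr
    have hrlb : ∀ n : ℕ, (n : ℝ) + 1 < r n := by
      intro n
      have h1 := hz3 n
      have h2 := norm_sub_norm_le (zseq n) zstar
      simp only [hr]
      linarith
    have hrpos : ∀ n : ℕ, 0 < r n := fun n => lt_of_le_of_lt (by positivity) (hrlb n)
    set w : ℕ → (J → ℝ) × (N → ℝ) := fun n => (r n)⁻¹ • (zseq n - zstar) with hwdef
    have hwsph : ∀ n : ℕ, w n ∈ Metric.sphere (0 : (J → ℝ) × (N → ℝ)) 1 := by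
      intro n
      rw [mem_sphere_zero_iff_norm, hwdef]
      simp only [norm_smul, Real.norm_eq_abs, abs_inv, abs_of_pos (hrpos n)]
      exact inv_mul_cancel₀ (ne_of_gt (hrpos n))
    obtain ⟨w0, hw0s, φ, hφ, hconv⟩ :=
      (isCompact_sphere (0 : (J → ℝ) × (N → ℝ)) 1).tendsto_subseq hwsph
    -- active constraints nonpositive on w0
    have hwl : ∀ l ∈ I, pairL (C l) w0 ≤ 0 := by
      intro l hl
      have hlim : Filter.Tendsto (fun n => pairL (C l) (w (φ n))) Filter.atTop
          (nhds (pairL (C l) w0)) := ((pairL_cont (C l)).tendsto w0).comp hconv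
      refine le_of_tendsto hlim (Filter.Eventually.of_forall fun n => ?_)
      rw [hwdef]
      simp only [map_smul, smul_eq_mul, map_sub]
      have h1 : pairL (C l) (zseq (φ n)) ≤ d0 l := (hmem _).mp (hz1 (φ n)) l
      have h2 : pairL (C l) zstar = d0 l := (Finset.mem_filter.mp hl).2
      have := inv_nonneg.mpr (le_of_lt (hrpos (φ n)))
      apply mul_nonpos_of_nonneg_of_nonpos this
      linarith
    -- objective nonnegative on w0
    have hwc : 0 ≤ pairL c w0 := by
      have hlim : Filter.Tendsto (fun n => pairL c (w (φ n))) Filter.atTop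
          (nhds (pairL c w0)) := ((pairL_cont c).tendsto w0).comp hconv
      have hb : Filter.Tendsto (fun n : ℕ => -((n : ℝ) + 1)⁻¹) Filter.atTop (nhds 0) := by
        rw [← neg_zero]
        exact (tendsto_one_div_add_atTop_nhds_zero_nat.congr
          (fun n => by rw [one_div])).neg
      refine le_of_tendsto_of_tendsto' hb hlim fun n => ?_
      rw [hwdef]
      simp only [map_smul, smul_eq_mul, map_sub]
      have h1 : M - 1 ≤ pairL c (zseq (φ n)) := hz2 (φ n)
      have h2 : pairL c (zseq (φ n)) ≤ M := hle _ (hz1 (φ n))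
      have hrn := hrpos (φ n)
      have hφn : (n : ℝ) + 1 ≤ r (φ n) := by
        have ha : (n : ℕ) ≤ φ n := hφ.le_apply
        have hb : ((n : ℝ)) ≤ (φ n : ℝ) := Nat.cast_le.mpr ha
        have := hrlb (φ n)
        linarith
      have hinv : (r (φ n))⁻¹ ≤ ((n : ℝ) + 1)⁻¹ := by
        apply inv_anti₀ (by positivity) hφn
      have hkey : -(r (φ n))⁻¹ ≤ (r (φ n))⁻¹ * (pairL c (zseq (φ n)) - pairL c zstar) := by
        rw [hzM]
        have : -1 ≤ pairL c (zseq (φ n)) - M := by linarith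
        calc -(r (φ n))⁻¹ = (r (φ n))⁻¹ * (-1) := by ring
          _ ≤ (r (φ n))⁻¹ * (pairL c (zseq (φ n)) - M) :=
            mul_le_mul_of_nonneg_left this (inv_nonneg.mpr (le_of_lt hrn))
      calc -((n : ℝ) + 1)⁻¹ ≤ -(r (φ n))⁻¹ := by linarith
        _ ≤ _ := hkey
    -- sum of nonpositives is nonneg ⟹ each is zero
    have hsum0 : ∑ l ∈ I, pairL (C l) w0 = 0 :=
      le_antisymm (Finset.sum_nonpos hwl) (by rw [← hc]; exact hwc)
    have : w0 = 0 := hzero w0 ((Finset.sum_eq_zero_iff_of_nonpos hwl).mp hsum0)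
    rw [this] at hw0s
    simp at hw0s
  obtain ⟨R, hR⟩ := hbdd
  -- the compact slice of D
  set T : Set ((J → ℝ) × (N → ℝ)) := D ∩ {z | M - 1 ≤ pairL c z} with hT
  have hTclosed : IsClosed T :=
    hDclosed.inter (isClosed_le continuous_const (pairL_cont c))
  have hTcompact : IsCompact T := by
    rw [Metric.isCompact_iff_isClosed_bounded]
    refine ⟨hTclosed, ?_⟩
    rw [isBounded_iff_forall_norm_le]
    exact ⟨R, fun z hz => hR z (hDsub hz.1) hz.2⟩
  have hzD : ∀ z ∈ D, z ≠ zstar := fun z hz h => hDz (h ▸ hz)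
  have hltM : ∀ z ∈ D, pairL c z < M := fun z hz =>
    lt_of_le_of_ne (hle z (hDsub hz)) (fun h => hzD z hz (huniq z (hDsub hz) h))
  rcases T.eq_empty_or_nonempty with hTe | hTne
  · refine ⟨c, M - 1, fun z hz => ?_, by rw [hzM]; linarith⟩
    by_contra h
    push_neg at h
    exact (Set.eq_empty_iff_forall_notMem.mp hTe z) ⟨hz, le_of_lt h⟩
  · obtain ⟨z0, hz0T, hz0max⟩ := hTcompact.exists_isMaxOn hTne
      ((pairL_cont c).continuousOn)
    refine ⟨c, max (M - 1) (pairL c z0), fun z hz => ?_, ?_⟩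
    · by_cases hcase : M - 1 ≤ pairL c z
      · exact le_max_of_le_right (hz0max ⟨hz, hcase⟩)
      · exact le_max_of_le_left (le_of_not_ge hcase)
    · rw [hzM]
      exact max_lt (by linarith) (hltM z0 hz0T.1)

end Aux

/-- Let `P'` be a polyhedron with `conv C'(N) ⊆ P' ⊆ Z(N)` and let `(x*, u*)` be an
extreme point of `P'` with `u* ∉ C(N)`.  Then there is a nonempty coalition `S` with
`(x*, u*) ∈ int U'(S)`, `(x*, u*) ∉ conv(P' \ int U'(S))`, and
`conv C'(N) ⊆ conv(P' \ int U'(S))`; consequently there is a cutting plane, i.e. a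
half-space containing `P' \ int U'(S)` but not `(x*, u*)`, whose intersection with
`P'` is a polyhedron `P̂'` with `conv C'(N) ⊆ P̂' ⊊ P'`. -/
theorem ntulp_intersection_cut_exists {K J N : Type*}
    [Fintype J] [Fintype K] [Fintype N] [Nonempty N]
    (A : K → J → ℝ) (b : N → K → ℝ) (v : N → J → ℝ)
    (P' : Set ((J → ℝ) × (N → ℝ)))
    (hpoly : ∃ (q : ℕ) (C : Fin q → (J → ℝ) × (N → ℝ)) (d : Fin q → ℝ),
      P' = {z | ∀ l, ((∑ j, (C l).1 j * z.1 j) + ∑ i, (C l).2 i * z.2 i) ≤ d l})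
    (hlow : convexHull ℝ (coreExt A b v) ⊆ P')
    (hup : P' ⊆ duSpace A b v Finset.univ)
    (zstar : (J → ℝ) × (N → ℝ))
    (hext : zstar ∈ Set.extremePoints ℝ P')
    (hnotcore : zstar.2 ∉ core A b v) :
    ∃ S : Finset N, S.Nonempty ∧
      zstar ∈ interior (utilitySpaceExt A b v S) ∧
      zstar ∉ convexHull ℝ (P' \ interior (utilitySpaceExt A b v S)) ∧
      convexHull ℝ (coreExt A b v) ⊆
        convexHull ℝ (P' \ interior (utilitySpaceExt A b v S)) ∧
      ∃ (c : (J → ℝ) × (N → ℝ)) (d : ℝ),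
        (∀ z ∈ P' \ interior (utilitySpaceExt A b v S),
          ((∑ j, c.1 j * z.1 j) + ∑ i, c.2 i * z.2 i) ≤ d) ∧
        d < ((∑ j, c.1 j * zstar.1 j) + ∑ i, c.2 i * zstar.2 i) ∧
        convexHull ℝ (coreExt A b v) ⊆
          (P' ∩ {z | ((∑ j, c.1 j * z.1 j) + ∑ i, c.2 i * z.2 i) ≤ d}) ∧
        (P' ∩ {z | ((∑ j, c.1 j * z.1 j) + ∑ i, c.2 i * z.2 i) ≤ d}) ⊂ P' := by
  classical
  obtain ⟨q, C, d0, hP⟩ := hpoly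
  have hP' : P' = {z | ∀ l, pairL (C l) z ≤ d0 l} := hP
  have hPconv : Convex ℝ P' := by
    rw [hP']
    have : {z : (J → ℝ) × (N → ℝ) | ∀ l, pairL (C l) z ≤ d0 l} =
        ⋂ l, {z | pairL (C l) z ≤ d0 l} := by ext z; simp [Set.mem_iInter]
    rw [this]
    exact convex_iInter fun l => convex_halfSpace_le (pairL (C l)).isLinear (d0 l)
  have hPclosed : IsClosed P' := by
    rw [hP']
    have : {z : (J → ℝ) × (N → ℝ) | ∀ l, pairL (C l) z ≤ d0 l} =
        ⋂ l, {z | pairL (C l) z ≤ d0 l} := by ext z; simp [Set.mem_iInter]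
    rw [this]
    exact isClosed_iInter fun l => isClosed_le (pairL_cont (C l)) continuous_const
  have hzP : zstar ∈ P' := hext.1
  -- find the blocking coalition S
  have hzU : zstar.2 ∈ utilitySpace A b v Finset.univ := ⟨zstar, hup hzP, rfl⟩
  have hzUn : zstar.2 ∈ ⋃ (S : Finset N) (_ : S.Nonempty),
      interior (utilitySpace A b v S) := by
    by_contra h
    exact hnotcore ⟨hzU, h⟩
  obtain ⟨S, hSne, hzS⟩ : ∃ S : Finset N, S.Nonempty ∧
      zstar.2 ∈ interior (utilitySpace A b v S) := by
    simpa using hzUn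
  -- zstar is interior to the extended blocking set
  have hint : zstar ∈ interior (utilitySpaceExt A b v S) := by
    have hopen : IsOpen (Prod.snd ⁻¹' interior (utilitySpace A b v S) :
        Set ((J → ℝ) × (N → ℝ))) := isOpen_interior.preimage continuous_snd
    have hsub : Prod.snd ⁻¹' interior (utilitySpace A b v S) ⊆
        interior (utilitySpaceExt A b v S) :=
      interior_maximal
        (fun p hp => (interior_subset hp : p.2 ∈ utilitySpace A b v S)) hopen
    exact hsub hzS
  set D : Set ((J → ℝ) × (N → ℝ)) := P' \ interior (utilitySpaceExt A b v S) with hD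
  -- zstar not in conv D
  have hPdiff : Convex ℝ (P' \ {zstar}) :=
    (hPconv.mem_extremePoints_iff_convex_diff.mp hext).2
  have hDsub' : D ⊆ P' \ {zstar} := fun z hz => ⟨hz.1, fun h => hz.2 (by
    simp only [Set.mem_singleton_iff] at h
    exact h ▸ hint)⟩
  have hhullD : convexHull ℝ D ⊆ P' \ {zstar} := convexHull_min hDsub' hPdiff
  have hznotD : zstar ∉ convexHull ℝ D := fun h => (hhullD h).2 rfl
  -- coreExt ⊆ D
  have hCD : coreExt A b v ⊆ D := by
    intro z hz
    refine ⟨hlow (subset_convexHull ℝ _ hz), fun hzint => hz.2 ?_⟩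
    exact Set.mem_iUnion.mpr ⟨S, Set.mem_iUnion.mpr ⟨hSne, hzint⟩⟩
  have hhullCD : convexHull ℝ (coreExt A b v) ⊆ convexHull ℝ D := convexHull_mono hCD
  -- the cut
  have hDclosed : IsClosed D := hPclosed.inter isOpen_interior.isClosed_compl
  have hDz : zstar ∉ D := fun h => h.2 hint
  obtain ⟨c, d, hd1, hd2⟩ := exposed_cut C d0 P' hP' zstar hext D Set.diff_subset
    hDclosed hDz (interior (utilitySpaceExt A b v S)) isOpen_interior hint
    (Set.disjoint_left.mpr fun z hz => hz.2)
  refine ⟨S, hSne, hint, hznotD, hhullCD, c, d, ?_, ?_, ?_, ?_⟩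
  · exact fun z hz => hd1 z hz
  · exact hd2
  · refine Set.subset_inter hlow ?_
    refine hhullCD.trans (convexHull_min ?_ (convex_halfSpace_le (pairL c).isLinear d))
    exact fun z hz => hd1 z hz
  · rw [Set.ssubset_iff_of_subset Set.inter_subset_left]
    exact ⟨zstar, hzP, fun h => absurd h.2 (not_le.mpr hd2)⟩
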